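/- Let d ≥ 3 and let (k_t)_{t>0} be jointly measurable kernels satisfying 0 ≤ k_t(x,y) ≤ P_t(x−y); set T_t f(x) = ∫_{ℝ^d} k_t(x,y) f(y) dy. Assume the semigroup property k_{t+s}(x,y) = ∫_{ℝ^d} k_t(x,z) k_s(z,y) dz for all s, t > 0 and almost every x, y ∈ ℝ^d, and that T_t f → f in L²(ℝ^d) as t → 0⁺ for every f ∈ L²(ℝ^d). Then for every τ > 0 and every f ∈ L¹(ℝ^d), ‖f‖_{L¹(ℝ^d)} ≤ ∫_{ℝ^d} sup_{0 < t ≤ τ} |T_t f(x)| dx. -/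

import Mathlib

open MeasureTheory Filter
open scoped ENNReal Topology

noncomputable section

/-- `ℝ^d` as a Euclidean space. -/
abbrev Rd (d : ℕ) := EuclideanSpace ℝ (Fin d)

/-- The Gauss–Weierstrass kernel `P_t(x) = (4πt)^{-d/2} exp(-|x|²/(4t))`. -/
def gauss (d : ℕ) (t : ℝ) (x : Rd d) : ℝ :=
  (4 * Real.pi * t) ^ (-(d : ℝ) / 2) * Real.exp (-‖x‖ ^ 2 / (4 * t))

lemma gauss_eq (d : ℕ) {t : ℝ} (ht : 0 < t) (x : Rd d) :
    gauss d t x = (4 * Real.pi * t) ^ (-(d : ℝ) / 2) * Real.exp (-(1/(4*t)) * ‖x‖ ^ 2) := by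
  unfold gauss
  have : -‖x‖ ^ 2 / (4 * t) = -(1/(4*t)) * ‖x‖ ^ 2 := by field_simp
  rw [this]

lemma gauss_integrable (d : ℕ) {t : ℝ} (ht : 0 < t) :
    Integrable (fun x : Rd d => gauss d t x) := by
  have hb : (0:ℝ) < 1/(4*t) := by positivity
  have h1 : Integrable (fun x : Rd d => Real.exp (-(1/(4*t)) * ‖x‖ ^ 2)) := by
    have := GaussianFourier.integrable_cexp_neg_mul_sq_norm_add
      (V := Rd d) (b := ((1/(4*t) : ℝ) : ℂ)) (by simpa using hb) 0 0
    refine this.norm.congr ?_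
    filter_upwards with x
    rw [Complex.norm_exp]
    norm_num
    left
    norm_cast
  have := h1.const_mul ((4 * Real.pi * t) ^ (-(d : ℝ) / 2))
  refine this.congr ?_
  filter_upwards with x
  rw [gauss_eq d ht]

lemma gauss_integral (d : ℕ) {t : ℝ} (ht : 0 < t) :
    ∫ x : Rd d, gauss d t x = 1 := by
  have hb : (0:ℝ) < 1/(4*t) := by positivity
  have h4 : (0:ℝ) < 4 * Real.pi * t := by positivity
  simp_rw [gauss_eq d ht]
  rw [MeasureTheory.integral_const_mul, GaussianFourier.integral_rexp_neg_mul_sq_norm hb]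
  rw [finrank_euclideanSpace_fin]
  have h5 : Real.pi / (1/(4*t)) = 4 * Real.pi * t := by field_simp
  rw [h5, ← Real.rpow_add h4, neg_div, neg_add_cancel, Real.rpow_zero]

lemma gauss_nonneg (d : ℕ) {t : ℝ} (ht : 0 < t) (x : Rd d) : 0 ≤ gauss d t x := by
  have h4 : (0:ℝ) < 4 * Real.pi * t := by positivity
  unfold gauss
  positivity

lemma gauss_le (d : ℕ) {t : ℝ} (ht : 0 < t) (x : Rd d) :
    gauss d t x ≤ (4 * Real.pi * t) ^ (-(d : ℝ) / 2) := by
  have h4 : (0:ℝ) < 4 * Real.pi * t := by positivity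
  have h1 : Real.exp (-‖x‖ ^ 2 / (4 * t)) ≤ 1 := by
    rw [Real.exp_le_one_iff]
    have : (0:ℝ) ≤ ‖x‖ ^ 2 / (4 * t) := by positivity
    rw [neg_div]
    linarith
  calc gauss d t x ≤ (4 * Real.pi * t) ^ (-(d : ℝ) / 2) * 1 := by
        unfold gauss
        exact mul_le_mul_of_nonneg_left h1 (Real.rpow_nonneg h4.le _)
    _ = _ := mul_one _

lemma lintegral_gauss_sub (d : ℕ) {t : ℝ} (ht : 0 < t) (y : Rd d) :
    ∫⁻ x, ENNReal.ofReal (gauss d t (x - y)) = 1 := by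
  have hint : Integrable (fun x : Rd d => gauss d t (x - y)) :=
    (gauss_integrable d ht).comp_sub_right y
  rw [← ofReal_integral_eq_lintegral_ofReal hint
      (Filter.Eventually.of_forall fun x => gauss_nonneg d ht _),
    integral_sub_right_eq_self (fun x => gauss d t x) y, gauss_integral d ht,
    ENNReal.ofReal_one]

section Kernel

variable {d : ℕ} {k : ℝ → Rd d → Rd d → ℝ}

lemma kernel_meas (hkmeas : Measurable fun p : ℝ × Rd d × Rd d => k p.1 p.2.1 p.2.2)
    (t : ℝ) : Measurable fun p : Rd d × Rd d => k t p.1 p.2 :=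
  hkmeas.comp (measurable_const.prodMk measurable_id)

lemma T_meas (hkmeas : Measurable fun p : ℝ × Rd d × Rd d => k p.1 p.2.1 p.2.2)
    {h : Rd d → ℝ} (hh : Measurable h) (t : ℝ) :
    Measurable fun x => ∫ y, k t x y * h y :=
  (((kernel_meas hkmeas t).mul (hh.comp measurable_snd)).stronglyMeasurable.integral_prod_right').measurable

lemma T_integrable (hkmeas : Measurable fun p : ℝ × Rd d × Rd d => k p.1 p.2.1 p.2.2)
    (hk : ∀ t > (0 : ℝ), ∀ x y : Rd d, 0 ≤ k t x y ∧ k t x y ≤ gauss d t (x - y))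
    {h : Rd d → ℝ} (hh : Integrable h) {t : ℝ} (ht : 0 < t) (x : Rd d) :
    Integrable fun y => k t x y * h y := by
  refine hh.bdd_mul (c := (4 * Real.pi * t) ^ (-(d : ℝ) / 2)) ?_ (Eventually.of_forall fun y => ?_)
  · exact ((kernel_meas hkmeas t).comp (measurable_const.prodMk measurable_id)).aestronglyMeasurable
  · rw [Real.norm_eq_abs, abs_of_nonneg (hk t ht x y).1]
    exact (hk t ht x y).2.trans (gauss_le d ht _)

lemma T_mass (hkmeas : Measurable fun p : ℝ × Rd d × Rd d => k p.1 p.2.1 p.2.2)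
    (hk : ∀ t > (0 : ℝ), ∀ x y : Rd d, 0 ≤ k t x y ∧ k t x y ≤ gauss d t (x - y))
    {h : Rd d → ℝ} (hhm : Measurable h) (hh : Integrable h) (hh0 : ∀ y, 0 ≤ h y)
    {t : ℝ} (ht : 0 < t) :
    ∫⁻ x, ENNReal.ofReal (∫ y, k t x y * h y) ≤ ∫⁻ y, ENNReal.ofReal (h y) := by
  have e1 : ∀ x, ENNReal.ofReal (∫ y, k t x y * h y)
      = ∫⁻ y, ENNReal.ofReal (k t x y * h y) := fun x =>
    ofReal_integral_eq_lintegral_ofReal (T_integrable hkmeas hk hh ht x)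
      (Filter.Eventually.of_forall fun y => mul_nonneg (hk t ht x y).1 (hh0 y))
  simp_rw [e1]
  rw [lintegral_lintegral_swap
    (((kernel_meas hkmeas t).mul (hhm.comp measurable_snd)).ennreal_ofReal.aemeasurable)]
  refine lintegral_mono fun y => ?_
  have e2 : ∀ x, ENNReal.ofReal (k t x y * h y)
      = ENNReal.ofReal (k t x y) * ENNReal.ofReal (h y) := fun x =>
    ENNReal.ofReal_mul (hk t ht x y).1
  simp_rw [e2]
  have hm : Measurable fun x : Rd d => ENNReal.ofReal (k t x y) :=
    ((kernel_meas hkmeas t).comp (measurable_id.prodMk measurable_const)).ennreal_ofReal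
  rw [lintegral_mul_const _ hm]
  calc (∫⁻ x, ENNReal.ofReal (k t x y)) * ENNReal.ofReal (h y)
      ≤ 1 * ENNReal.ofReal (h y) := by
        refine mul_le_mul_left ?_ _
        calc ∫⁻ x, ENNReal.ofReal (k t x y)
            ≤ ∫⁻ x, ENNReal.ofReal (gauss d t (x - y)) :=
              lintegral_mono fun x => ENNReal.ofReal_le_ofReal (hk t ht x y).2
          _ = 1 := lintegral_gauss_sub d ht y
    _ = _ := one_mul _

end Kernel

lemma statement18_core (d : ℕ) (k : ℝ → Rd d → Rd d → ℝ)
    (hkmeas : Measurable fun p : ℝ × Rd d × Rd d => k p.1 p.2.1 p.2.2)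
    (hk : ∀ t > (0 : ℝ), ∀ x y : Rd d, 0 ≤ k t x y ∧ k t x y ≤ gauss d t (x - y))
    (hL2 : ∀ f : Rd d → ℝ, MemLp f 2 volume →
      Tendsto (fun t => eLpNorm (fun x => (∫ y, k t x y * f y) - f x) 2 volume)
        (𝓝[>] (0 : ℝ)) (𝓝 0))
    (τ : ℝ) (hτ : 0 < τ) (f : Rd d → ℝ) (hfm : Measurable f) (hf : Integrable f) :
    ENNReal.ofReal (∫ x, |f x|) ≤
      ∫⁻ x, ⨆ t ∈ Set.Ioc (0 : ℝ) τ, ENNReal.ofReal |∫ y, k t x y * f y| := by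
  set M := ∫⁻ x, ⨆ t ∈ Set.Ioc (0 : ℝ) τ, ENNReal.ofReal |∫ y, k t x y * f y| with hMdef
  refine ENNReal.le_of_forall_pos_le_add fun ε hε _ => ?_
  have hεpos : (0 : ℝ≥0∞) < (ε : ℝ≥0∞) := by exact_mod_cast hε
  have hε2 : ((ε : ℝ≥0∞) / 2) ≠ 0 := (ENNReal.div_pos hεpos.ne' (by norm_num)).ne'
  obtain ⟨g, hg_supp, hg_close, hg_cont, hg_mem1⟩ :=
    (memLp_one_iff_integrable.2 hf).exists_hasCompactSupport_eLpNorm_sub_le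
      ENNReal.one_ne_top hε2
  have hg_int : Integrable g := memLp_one_iff_integrable.1 hg_mem1
  have hg2 : MemLp g 2 volume := hg_cont.memLp_of_hasCompactSupport hg_supp
  have hgm : Measurable g := hg_cont.measurable
  have hD : ∫⁻ y, ENNReal.ofReal |f y - g y| ≤ (ε : ℝ≥0∞) / 2 := by
    refine le_trans (le_of_eq ?_) hg_close
    rw [eLpNorm_one_eq_lintegral_enorm]
    congr 1 with y
    rw [Pi.sub_apply, ← Real.norm_eq_abs, ofReal_norm_eq_enorm]
  -- the approximating sequence of times
  have hsτ : ∀ m : ℕ, τ / (m + 1) ∈ Set.Ioc (0 : ℝ) τ := by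
    intro m
    have hm : (1 : ℝ) ≤ (m : ℝ) + 1 := by
      have : (0 : ℝ) ≤ (m : ℝ) := Nat.cast_nonneg m
      linarith
    constructor
    · positivity
    · rw [div_le_iff₀ (by positivity)]
      nlinarith
  have hs_tend : Tendsto (fun m : ℕ => τ / ((m : ℝ) + 1)) atTop (𝓝[>] (0 : ℝ)) := by
    refine tendsto_nhdsWithin_of_tendsto_nhds_of_eventually_within _ ?_
      (Eventually.of_forall fun m => (hsτ m).1)
    have := tendsto_one_div_add_atTop_nhds_zero_nat.const_mul τ
    simpa [mul_one_div, div_eq_mul_inv] using this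
  set Tg : ℕ → Rd d → ℝ := fun m x => ∫ y, k (τ / ((m : ℝ) + 1)) x y * g y with hTgdef
  have hTgm : ∀ m, Measurable (Tg m) := fun m => T_meas hkmeas hgm _
  have h2 : Tendsto (fun m => eLpNorm (Tg m - g) 2 volume) atTop (𝓝 0) := by
    have := (hL2 g hg2).comp hs_tend
    exact this
  have htim : TendstoInMeasure volume Tg atTop g :=
    tendstoInMeasure_of_tendsto_eLpNorm (by norm_num : (2 : ℝ≥0∞) ≠ 0)
      (fun m => (hTgm m).aestronglyMeasurable) hg_cont.aestronglyMeasurable h2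
  obtain ⟨ns, -, hae⟩ := htim.exists_seq_tendsto_ae
  -- per-time bound
  have hstep : ∀ t ∈ Set.Ioc (0 : ℝ) τ,
      ∫⁻ x, ENNReal.ofReal |∫ y, k t x y * g y| ≤ M + (ε : ℝ≥0∞) / 2 := by
    intro t ht
    have ht0 : 0 < t := ht.1
    have hfg_int : Integrable (fun y => g y - f y) := hg_int.sub hf
    have habs : Integrable (fun y => |f y - g y|) := (hf.sub hg_int).abs
    have hpt : ∀ x, |∫ y, k t x y * g y|
        ≤ |∫ y, k t x y * f y| + ∫ y, k t x y * |f y - g y| := by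
      intro x
      have e1 : (∫ y, k t x y * g y)
          = (∫ y, k t x y * f y) + ∫ y, k t x y * (g y - f y) := by
        rw [← integral_add (T_integrable hkmeas hk hf ht0 x)
          (T_integrable hkmeas hk hfg_int ht0 x)]
        refine integral_congr_ae (Eventually.of_forall fun y => ?_)
        ring
      calc |∫ y, k t x y * g y|
          ≤ |∫ y, k t x y * f y| + |∫ y, k t x y * (g y - f y)| := by
            rw [e1]; exact abs_add_le _ _
        _ ≤ _ := by
            refine add_le_add_right ?_ _
            have hni := norm_integral_le_integral_norm (μ := volume)
              fun y => k t x y * (g y - f y)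
            simp only [Real.norm_eq_abs] at hni
            calc |∫ y, k t x y * (g y - f y)| ≤ ∫ y, |k t x y * (g y - f y)| := hni
              _ = ∫ y, k t x y * |f y - g y| := by
                  refine integral_congr_ae (Eventually.of_forall fun y => ?_)
                  simp only [abs_mul, abs_of_nonneg (hk t ht0 x y).1,
                    abs_sub_comm (g y) (f y)]
    calc ∫⁻ x, ENNReal.ofReal |∫ y, k t x y * g y|
        ≤ ∫⁻ x, (ENNReal.ofReal |∫ y, k t x y * f y|
            + ENNReal.ofReal (∫ y, k t x y * |f y - g y|)) :=
          lintegral_mono fun x =>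
            (ENNReal.ofReal_le_ofReal (hpt x)).trans ENNReal.ofReal_add_le
      _ = (∫⁻ x, ENNReal.ofReal |∫ y, k t x y * f y|)
            + ∫⁻ x, ENNReal.ofReal (∫ y, k t x y * |f y - g y|) :=
          lintegral_add_left ((T_meas hkmeas hfm t).abs.ennreal_ofReal) _
      _ ≤ M + (ε : ℝ≥0∞) / 2 := by
          refine add_le_add ?_ ?_
          · exact lintegral_mono fun x => le_iSup₂
              (f := fun t' (_ : t' ∈ Set.Ioc (0 : ℝ) τ) =>
                ENNReal.ofReal |∫ y, k t' x y * f y|) t ht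
          · exact (T_mass hkmeas hk (hfm.sub hgm).abs habs
              (fun y => abs_nonneg _) ht0).trans hD
  -- Fatou along the a.e. convergent subsequence
  have hfatou : ∫⁻ x, ENNReal.ofReal |g x|
      ≤ atTop.liminf fun i => ∫⁻ x, ENNReal.ofReal |Tg (ns i) x| := by
    have heq : ∫⁻ x, ENNReal.ofReal |g x|
        = ∫⁻ x, atTop.liminf fun i => ENNReal.ofReal |Tg (ns i) x| := by
      refine lintegral_congr_ae (hae.mono fun x hx => ?_)
      have : Tendsto (fun i => ENNReal.ofReal |Tg (ns i) x|) atTop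
          (𝓝 (ENNReal.ofReal |g x|)) :=
        (ENNReal.continuous_ofReal.tendsto _).comp ((continuous_abs.tendsto _).comp hx)
      exact this.liminf_eq.symm
    rw [heq]
    exact lintegral_liminf_le fun i => ((hTgm (ns i)).abs).ennreal_ofReal
  have h0 : ENNReal.ofReal (∫ x, |f x|) = ∫⁻ x, ENNReal.ofReal |f x| :=
    ofReal_integral_eq_lintegral_ofReal hf.abs (Eventually.of_forall fun x => abs_nonneg _)
  calc ENNReal.ofReal (∫ x, |f x|) = ∫⁻ x, ENNReal.ofReal |f x| := h0
    _ ≤ ∫⁻ x, (ENNReal.ofReal |g x| + ENNReal.ofReal |f x - g x|) := by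
        refine lintegral_mono fun x => ?_
        have h1 : |f x| ≤ |g x| + |f x - g x| := by
          have h2 : |g x + (f x - g x)| ≤ |g x| + |f x - g x| := abs_add_le _ _
          simpa using h2
        exact (ENNReal.ofReal_le_ofReal h1).trans ENNReal.ofReal_add_le
    _ = (∫⁻ x, ENNReal.ofReal |g x|) + ∫⁻ x, ENNReal.ofReal |f x - g x| :=
        lintegral_add_left (hgm.abs.ennreal_ofReal) _
    _ ≤ (atTop.liminf fun i => ∫⁻ x, ENNReal.ofReal |Tg (ns i) x|) + (ε : ℝ≥0∞) / 2 :=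
        add_le_add hfatou hD
    _ ≤ (M + (ε : ℝ≥0∞) / 2) + (ε : ℝ≥0∞) / 2 := by
        refine add_le_add_left ?_ _
        refine le_trans (Filter.liminf_le_liminf
          (Eventually.of_forall fun i => hstep _ (hsτ (ns i)))) ?_
        simp [Filter.liminf_const]
    _ = M + (ε : ℝ≥0∞) := by rw [add_assoc, ENNReal.add_halves]

/-- Corollary, Appendix: under the same assumptions as Statement 16,
for every `τ > 0` and `f ∈ L¹`, `‖f‖_{L¹} ≤ ∫ sup_{0 < t ≤ τ} |T_t f(x)| dx`,
the right-hand side being an upper Lebesgue integral. -/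
theorem statement18 (d : ℕ) (hd : 3 ≤ d) (k : ℝ → Rd d → Rd d → ℝ)
    (hkmeas : Measurable fun p : ℝ × Rd d × Rd d => k p.1 p.2.1 p.2.2)
    (hk : ∀ t > (0 : ℝ), ∀ x y : Rd d, 0 ≤ k t x y ∧ k t x y ≤ gauss d t (x - y))
    (hsemi : ∀ s > (0 : ℝ), ∀ t > (0 : ℝ), ∀ᵐ p : Rd d × Rd d ∂(volume.prod volume),
      k (t + s) p.1 p.2 = ∫ z, k t p.1 z * k s z p.2)
    (hL2 : ∀ f : Rd d → ℝ, MemLp f 2 volume →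
      Tendsto (fun t => eLpNorm (fun x => (∫ y, k t x y * f y) - f x) 2 volume)
        (𝓝[>] (0 : ℝ)) (𝓝 0)) :
    ∀ τ > (0 : ℝ), ∀ f : Rd d → ℝ, Integrable f →
      ENNReal.ofReal (∫ x, |f x|) ≤
        ∫⁻ x, ⨆ t ∈ Set.Ioc (0 : ℝ) τ, ENNReal.ofReal |∫ y, k t x y * f y| := by
  intro τ hτ f hf
  set f' : Rd d → ℝ := hf.1.mk f with hf'def
  have hff' : f =ᵐ[volume] f' := hf.1.ae_eq_mk
  have hf'm : Measurable f' := hf.1.stronglyMeasurable_mk.measurable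
  have hf' : Integrable f' := hf.congr hff'
  have hT : ∀ t x, (∫ y, k t x y * f y) = ∫ y, k t x y * f' y := fun t x =>
    integral_congr_ae (hff'.mono fun y hy => by simp only [hy])
  have hI : (∫ x, |f x|) = ∫ x, |f' x| :=
    integral_congr_ae (hff'.mono fun y hy => by simp only [hy])
  rw [hI]
  simp only [hT]
  exact statement18_core d k hkmeas hk hL2 τ hτ f' hf'm hf'
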